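/- Let R be a Prüfer domain. Every finitely presented torsion-free R-module M (i.e., such that r·x = 0 with r ∈ R, x ∈ M implies r = 0 or x = 0) is a projective R-module. -/

import Mathlib

open TensorProduct LinearMap

theorem aux_sum_rep {R : Type*} [CommRing R] (I J : Ideal R) {c : R} (hc : c ∈ I * J) :
    ∃ (n : ℕ) (a : Fin n → I) (b : Fin n → J), ∑ i, (a i : R) * (b i : R) = c := by
  refine Submodule.mul_induction_on hc ?_ ?_
  · intro m hm n hn
    exact ⟨1, fun _ => ⟨m, hm⟩, fun _ => ⟨n, hn⟩, by simp⟩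
  · rintro x y ⟨n₁, a₁, b₁, h₁⟩ ⟨n₂, a₂, b₂, h₂⟩
    refine ⟨n₁ + n₂, Fin.append a₁ a₂, Fin.append b₁ b₂, ?_⟩
    rw [Fin.sum_univ_add]
    simp only [Fin.append_left, Fin.append_right, h₁, h₂]

theorem aux_flat {R : Type*} [CommRing R] [IsDomain R]
    (hpruf : ∀ I : Ideal R, I.FG → I ≠ ⊥ →
      ∃ (J : Ideal R) (c : R), J.FG ∧ c ≠ 0 ∧ I * J = Ideal.span {c})
    (M : Type*) [AddCommGroup M] [Module R M] [NoZeroSMulDivisors R M] :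
    Module.Flat R M := by
  rw [Module.Flat.iff_lift_lsmul_comp_subtype_injective]
  intro I hIfg
  set f : I ⊗[R] M →ₗ[R] M := TensorProduct.lift ((lsmul R M).comp I.subtype) with hf
  rw [injective_iff_map_eq_zero]
  intro z hz
  by_cases hI : I = ⊥
  · subst hI
    have : ∀ w : (⊥ : Ideal R) ⊗[R] M, w = 0 := by
      intro w
      induction w using TensorProduct.induction_on with
      | zero => rfl
      | tmul x m =>
        have : x = 0 := Subtype.ext ((Submodule.mem_bot R).mp x.2)
        rw [this, zero_tmul]
      | add x y hx hy => rw [hx, hy, add_zero]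
    exact this z
  obtain ⟨J, c, hJfg, hc, hIJ⟩ := hpruf I hIfg hI
  have hcmem : c ∈ I * J := hIJ ▸ Ideal.mem_span_singleton_self c
  obtain ⟨n, a, b, hab⟩ := aux_sum_rep I J hcmem
  -- define the "division by c" maps
  have hσ : ∀ (j : J) (x : I), ∃ s : R, s * c = (j : R) * (x : R) := by
    intro j x
    have : (j : R) * (x : R) ∈ Ideal.span {c} := by
      rw [← hIJ, mul_comm (I : Ideal R) J]
      exact Ideal.mul_mem_mul j.2 x.2
    rwa [Ideal.mem_span_singleton'] at this
  choose σf hσf using hσ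
  have hcan : ∀ (j : J) (x y : R), x * c = y * c → x = y := fun j x y h =>
    mul_right_cancel₀ hc h
  let σ : J → (I →ₗ[R] R) := fun j =>
    { toFun := σf j
      map_add' := by
        intro x y
        refine mul_right_cancel₀ hc ?_
        rw [add_mul, hσf, hσf, hσf]
        push_cast
        ring
      map_smul' := by
        intro r x
        refine mul_right_cancel₀ hc ?_
        simp only [RingHom.id_apply, smul_eq_mul]
        rw [mul_assoc, hσf, hσf]
        push_cast
        rw [smul_eq_mul]
        ring }
  let g : J → (I ⊗[R] M →ₗ[R] M) := fun j =>
    TensorProduct.lift ((lsmul R M).comp (σ j))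
  have hg_smul : ∀ (j : J) (w : I ⊗[R] M), c • g j w = (j : R) • f w := by
    intro j w
    induction w using TensorProduct.induction_on with
    | zero => simp
    | tmul x m =>
      simp only [g, f, TensorProduct.lift.tmul, LinearMap.comp_apply, lsmul_apply,
        Submodule.subtype_apply]
      rw [smul_smul, smul_smul]
      congr 1
      show c * σf j x = (j : R) * (x : R)
      rw [mul_comm, hσf]
    | add x y hx hy => simp [map_add, smul_add, hx, hy]
  have hrecon : ∀ w : I ⊗[R] M, ∑ i, (a i : I) ⊗ₜ[R] (g (b i) w) = w := by
    intro w
    induction w using TensorProduct.induction_on with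
    | zero => simp
    | tmul x m =>
      have key : ∑ i, σ (b i) x • (a i) = x := by
        refine Subtype.ext ?_
        have : c * ((∑ i, σ (b i) x • (a i) : I) : R) = c * (x : R) := by
          push_cast
          rw [Finset.mul_sum]
          calc ∑ i, c * (σ (b i) x • ((a i : I) : R))
              = ∑ i, (a i : R) * (b i : R) * (x : R) := by
                refine Finset.sum_congr rfl fun i _ => ?_
                calc c * (σ (b i) x • ((a i : I) : R))
                    = (σf (b i) x * c) * (a i : R) := by
                      simp only [σ, LinearMap.coe_mk, AddHom.coe_mk, smul_eq_mul]; ring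
                  _ = ((b i : R) * (x : R)) * (a i : R) := by rw [hσf]
                  _ = (a i : R) * (b i : R) * (x : R) := by ring
            _ = (∑ i, (a i : R) * (b i : R)) * (x : R) := (Finset.sum_mul _ _ _).symm
            _ = c * (x : R) := by rw [hab]
        exact mul_left_cancel₀ hc this
      calc ∑ i, (a i : I) ⊗ₜ[R] (g (b i) (x ⊗ₜ[R] m))
          = ∑ i, (σ (b i) x • (a i : I)) ⊗ₜ[R] m := by
            refine Finset.sum_congr rfl fun i _ => ?_
            simp only [g, TensorProduct.lift.tmul, LinearMap.comp_apply, lsmul_apply]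
            rw [TensorProduct.smul_tmul]
        _ = (∑ i, σ (b i) x • (a i : I)) ⊗ₜ[R] m := by rw [TensorProduct.sum_tmul]
        _ = x ⊗ₜ[R] m := by rw [key]
    | add x y hx hy =>
      simp only [map_add, TensorProduct.tmul_add, Finset.sum_add_distrib, hx, hy]
  have hgz : ∀ i, g (b i) z = 0 := by
    intro i
    have := hg_smul (b i) z
    rw [hz, smul_zero] at this
    exact (smul_eq_zero.mp this).resolve_left hc
  rw [← hrecon z]
  simp [hgz]

/-- Over a Prüfer domain, every finitely presented torsion-free module is projective. -/
theorem stmt_12 {R : Type*} [CommRing R] [IsDomain R]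
    (hpruf : ∀ I : Ideal R, I.FG → I ≠ ⊥ →
      ∃ (J : Ideal R) (c : R), J.FG ∧ c ≠ 0 ∧ I * J = Ideal.span {c})
    (M : Type*) [AddCommGroup M] [Module R M]
    [Module.FinitePresentation R M] [NoZeroSMulDivisors R M] :
    Module.Projective R M := by
  have : Module.Flat R M := aux_flat hpruf M
  apply Module.projective_of_localization_maximal
  intro P hP
  have : Module.Free (Localization.AtPrime P) (LocalizedModule P.primeCompl M) :=
    Module.free_of_flat_of_isLocalRing
  infer_instance
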